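/- The determinant of the 3×3 Jacobian matrix (∂Fᵢ/∂xⱼ)₀≤i,j≤2 of the map F equals 2·x₀·(β·x)·(β₁(α·x) − α₁(β·x)) for every x = (x₀,x₁,x₂) ∈ ℂ³. -/

import Mathlib

lemma key (c0 c1 c2 : ℂ) (k : Fin 3) (x : Fin 3 → ℂ) (j : Fin 3) :
    fderiv ℂ (fun y : Fin 3 → ℂ => y k * (c0 * y 0 + c1 * y 1 + c2 * y 2)) x (Pi.single j 1) =
      (Pi.single j 1 : Fin 3 → ℂ) k * (c0 * x 0 + c1 * x 1 + c2 * x 2) +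
        x k * (c0 * (Pi.single j 1 : Fin 3 → ℂ) 0 + c1 * (Pi.single j 1 : Fin 3 → ℂ) 1 +
          c2 * (Pi.single j 1 : Fin 3 → ℂ) 2) := by
  have hp : ∀ i : Fin 3, HasFDerivAt (fun y : Fin 3 → ℂ => y i)
      (ContinuousLinearMap.proj i : (Fin 3 → ℂ) →L[ℂ] ℂ) x :=
    fun i => hasFDerivAt_apply i x
  have hg : HasFDerivAt (fun y : Fin 3 → ℂ => c0 * y 0 + c1 * y 1 + c2 * y 2)
      (c0 • ContinuousLinearMap.proj 0 + c1 • ContinuousLinearMap.proj 1 +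
        c2 • ContinuousLinearMap.proj 2 : (Fin 3 → ℂ) →L[ℂ] ℂ) x :=
    (((hp 0).const_mul c0).add ((hp 1).const_mul c1)).add ((hp 2).const_mul c2)
  have h : fderiv ℂ (fun y : Fin 3 → ℂ => y k * (c0 * y 0 + c1 * y 1 + c2 * y 2)) x = _ :=
    ((hp k).mul hg).fderiv
  rw [h]
  simp [ContinuousLinearMap.proj, mul_comm]
  ring

/-- The determinant of the Jacobian matrix `(∂Fᵢ/∂xⱼ)` of the homogeneous quadratic map
`F(x₀,x₁,x₂) = (x₀(β·x), x₂(β·x), x₀(α·x))` equals `2·x₀·(β·x)·(β₁(α·x) − α₁(β·x))`. -/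
theorem stmt1 (a0 a1 a2 b0 b1 b2 : ℂ) (x : Fin 3 → ℂ) :
    Matrix.det (Matrix.of fun i j : Fin 3 =>
        fderiv ℂ (fun y : Fin 3 → ℂ =>
          ![y 0 * (b0 * y 0 + b1 * y 1 + b2 * y 2),
            y 2 * (b0 * y 0 + b1 * y 1 + b2 * y 2),
            y 0 * (a0 * y 0 + a1 * y 1 + a2 * y 2)] i) x (Pi.single j 1)) =
      2 * x 0 * (b0 * x 0 + b1 * x 1 + b2 * x 2) *
        (b1 * (a0 * x 0 + a1 * x 1 + a2 * x 2) - a1 * (b0 * x 0 + b1 * x 1 + b2 * x 2)) := by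
  rw [Matrix.det_fin_three]
  simp only [Matrix.of_apply, Matrix.cons_val_zero, Matrix.cons_val_one, Matrix.head_cons,
    Matrix.cons_val_two, Matrix.tail_cons]
  rw [show (fun y : Fin 3 → ℂ => y 0 * (b0 * y 0 + b1 * y 1 + b2 * y 2)) =
    (fun y : Fin 3 → ℂ => y (0:Fin 3) * (b0 * y 0 + b1 * y 1 + b2 * y 2)) from rfl]
  simp only [key]
  norm_num [Pi.single_apply, Fin.ext_iff]
  ring
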